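/- Let f : 𝔽₂^n → 𝔽₂ be a Boolean function. Then the number of nonvanishing 2-flats of f satisfies |N_{A,2}(f)| ≤ 2^{2n−4}(2^n − 1)/3, with equality if and only if f is bent (i.e., all Walsh coefficients of f have absolute value 2^{n/2}). -/
import Mathlib

noncomputable def setSum {α β : Type*} [Fintype α] [AddCommMonoid β]
    (S : Set α) (F : α → β) : β :=
  ∑ x ∈ (Set.toFinite S).toFinset, F x

def IsFlat (n k : ℕ) (A : Set (Fin n → ZMod 2)) : Prop :=
  ∃ (U : Submodule (ZMod 2) (Fin n → ZMod 2)) (a : Fin n → ZMod 2),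
    Module.finrank (ZMod 2) U = k ∧ A = (fun x => x + a) '' (U : Set (Fin n → ZMod 2))

def walsh (n : ℕ) (f : (Fin n → ZMod 2) → ZMod 2) (a : Fin n → ZMod 2) : ℤ :=
  ∑ x : Fin n → ZMod 2, (-1 : ℤ) ^ (f x + ∑ i, x i * a i).val

namespace Aux

abbrev V (n : ℕ) := Fin n → ZMod 2

def ee (u : ZMod 2) : ℤ := (-1) ^ u.val

lemma ee_add : ∀ u v : ZMod 2, ee (u + v) = ee u * ee v := by decide

lemma ee_zero : ee 0 = 1 := rfl
lemma ee_one : ee 1 = -1 := rfl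

variable {n : ℕ}

lemma vadd_self (v : V n) : v + v = 0 := funext fun i => by
  have : ∀ u : ZMod 2, u + u = 0 := by decide
  exact this _

lemma vadd_cancel (a b : V n) : a + b + b = a := by
  rw [add_assoc, vadd_self, add_zero]

lemma vadd_eq_zero_iff (a b : V n) : a + b = 0 ↔ a = b := by
  constructor
  · intro h
    have := congrArg (fun t => t + b) h
    simpa [vadd_cancel] using this
  · rintro rfl; exact vadd_self a

def ip (u a : V n) : ZMod 2 := ∑ i, u i * a i

lemma ip_add_left (u v a : V n) : ip (u + v) a = ip u a + ip v a := by
  simp [ip, add_mul, Finset.sum_add_distrib]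

lemma walsh_eq (f : V n → ZMod 2) (a : V n) :
    walsh n f a = ∑ x, ee (f x) * ee (ip x a) := by
  unfold walsh
  exact Finset.sum_congr rfl fun x _ => (ee_add (f x) (ip x a))

lemma orth (u : V n) : (∑ a : V n, ee (ip u a)) = if u = 0 then (2 : ℤ) ^ n else 0 := by
  split_ifs with h
  · subst h
    simp [ip, ee_zero, Finset.card_univ]
  · obtain ⟨i, hi⟩ : ∃ i, u i ≠ 0 := by
      by_contra hc
      push_neg at hc
      exact h (funext fun i => hc i)
    have hui : u i = 1 := by
      have : ∀ v : ZMod 2, v ≠ 0 → v = 1 := by decide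
      exact this _ hi
    set c : V n := Pi.single i 1 with hc
    have key : (∑ a : V n, ee (ip u a)) = ∑ a : V n, ee (ip u (a + c)) :=
      (Fintype.sum_equiv (Equiv.addRight c) _ _ (fun a => rfl)).symm
    have hip : ∀ a : V n, ip u (a + c) = ip u a + 1 := by
      intro a
      have : ip u c = 1 := by
        simp [ip, hc, Pi.single_apply]
        simpa using hui
      calc ip u (a + c) = ip u a + ip u c := by
            simp [ip, mul_add, Finset.sum_add_distrib]
        _ = ip u a + 1 := by rw [this]
    have : (∑ a : V n, ee (ip u a)) = -∑ a : V n, ee (ip u a) := by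
      nth_rewrite 1 [key]
      simp [hip, ee_add, ee_one, Finset.sum_neg_distrib]
    linarith


lemma ee_mul_self : ∀ u : ZMod 2, ee u * ee u = 1 := by decide

lemma card_V : Fintype.card (V n) = 2 ^ n := by
  simp [Fintype.card_fun]

variable (f : V n → ZMod 2)

lemma sum_walsh_sq : ∑ a : V n, (walsh n f a) ^ 2 = 2 ^ (2 * n) := by
  have h1 : ∀ a : V n, walsh n f a ^ 2 =
      ∑ x : V n, ∑ y : V n, (ee (f x) * ee (f y)) * ee (ip (x + y) a) := by
    intro a
    rw [walsh_eq, sq, Finset.sum_mul_sum]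
    refine Finset.sum_congr rfl fun x _ => Finset.sum_congr rfl fun y _ => ?_
    rw [ip_add_left, ee_add]; ring
  simp only [h1]
  rw [Finset.sum_comm]
  have h2 : ∀ x : V n, (∑ a : V n, ∑ y : V n, (ee (f x) * ee (f y)) * ee (ip (x + y) a))
      = 2 ^ n := by
    intro x
    rw [Finset.sum_comm]
    have h3 : ∀ y : V n, (∑ a : V n, (ee (f x) * ee (f y)) * ee (ip (x + y) a))
        = (ee (f x) * ee (f y)) * (if x + y = 0 then (2:ℤ)^n else 0) := by
      intro y; rw [← Finset.mul_sum, orth]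
    simp only [h3, vadd_eq_zero_iff, mul_ite, mul_zero]
    rw [Finset.sum_ite_eq]
    simp [ee_mul_self]
  simp only [h2]
  rw [Finset.sum_const, Finset.card_univ, card_V, nsmul_eq_mul, two_mul, pow_add]
  push_cast
  ring

def gg (p : V n × V n × V n) : ZMod 2 :=
  f p.1 + f p.2.1 + f p.2.2 + f (p.1 + p.2.1 + p.2.2)

lemma sum_walsh_four :
    ∑ a : V n, (walsh n f a) ^ 4 = 2 ^ n * ∑ p : V n × V n × V n, ee (gg f p) := by
  have h1 : ∀ a : V n, walsh n f a ^ 4 =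
      ∑ x : V n, ∑ y : V n, ∑ z : V n, ∑ w : V n,
        (ee (f x + f y + f z + f w)) * ee (ip (x + y + z + w) a) := by
    intro a
    rw [walsh_eq, show ∀ s : ℤ, s ^ 4 = s * (s * (s * s)) from fun s => by ring]
    simp only [Finset.mul_sum, Finset.sum_mul]
    refine Finset.sum_congr rfl fun x _ => Finset.sum_congr rfl fun y _ =>
      Finset.sum_congr rfl fun z _ => Finset.sum_congr rfl fun w _ => ?_
    rw [show x + y + z + w = (x + y) + (z + w) from by ring, ip_add_left, ip_add_left,
      ip_add_left]
    simp only [ee_add]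
    ring
  have h2 : ∀ x y z : V n,
      (∑ w : V n, ∑ a : V n, (ee (f x + f y + f z + f w)) * ee (ip (x + y + z + w) a))
        = 2 ^ n * ee (gg f (x, y, z)) := by
    intro x y z
    have h3 : ∀ w : V n,
        (∑ a : V n, (ee (f x + f y + f z + f w)) * ee (ip (x + y + z + w) a))
          = (ee (f x + f y + f z + f w)) * (if x + y + z + w = 0 then (2:ℤ)^n else 0) :=
      fun w => by rw [← Finset.mul_sum, orth]
    simp only [h3, vadd_eq_zero_iff, mul_ite, mul_zero]
    rw [Finset.sum_ite_eq]
    simp only [Finset.mem_univ, if_true, gg]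
    ring
  calc ∑ a : V n, (walsh n f a) ^ 4
      = ∑ a : V n, ∑ x : V n, ∑ y : V n, ∑ z : V n, ∑ w : V n,
          (ee (f x + f y + f z + f w)) * ee (ip (x + y + z + w) a) := by simp only [h1]
    _ = ∑ x : V n, ∑ y : V n, ∑ z : V n, ∑ w : V n, ∑ a : V n,
          (ee (f x + f y + f z + f w)) * ee (ip (x + y + z + w) a) := by
        rw [Finset.sum_comm]
        refine Finset.sum_congr rfl fun x _ => ?_
        rw [Finset.sum_comm]
        refine Finset.sum_congr rfl fun y _ => ?_
        rw [Finset.sum_comm]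
        refine Finset.sum_congr rfl fun z _ => ?_
        exact Finset.sum_comm
    _ = ∑ x : V n, ∑ y : V n, ∑ z : V n, 2 ^ n * ee (gg f (x, y, z)) := by
        refine Finset.sum_congr rfl fun x _ => Finset.sum_congr rfl fun y _ =>
          Finset.sum_congr rfl fun z _ => ?_
        exact h2 x y z
    _ = 2 ^ n * ∑ p : V n × V n × V n, ee (gg f p) := by
        simp only [Fintype.sum_prod_type, Finset.mul_sum]


lemma key : (2:ℤ)^n * (∑ p : V n × V n × V n, ee (gg f p))
    = (∑ a : V n, ((walsh n f a)^2 - 2^n)^2) + 2^(3*n) := by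
  have h4 := sum_walsh_four f
  have h2 := sum_walsh_sq f
  have expand : (∑ a : V n, ((walsh n f a)^2 - 2^n)^2)
      = (∑ a : V n, (walsh n f a)^4) - 2^(n+1) * (∑ a : V n, (walsh n f a)^2)
        + 2^n * 2^(2*n) := by
    rw [Finset.mul_sum, ← Finset.sum_sub_distrib]
    have hc : ((Finset.univ : Finset (V n)).card : ℤ) = 2^n := by
      rw [Finset.card_univ, card_V]; push_cast; ring
    calc (∑ a : V n, ((walsh n f a)^2 - 2^n)^2)
        = ∑ a : V n, (((walsh n f a)^4 - 2^(n+1) * (walsh n f a)^2) + 2^(2*n)) := by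
          refine Finset.sum_congr rfl fun a _ => ?_; ring
      _ = (∑ a : V n, ((walsh n f a)^4 - 2^(n+1) * (walsh n f a)^2)) + (Finset.univ.card : ℤ) * 2^(2*n) := by
          rw [Finset.sum_add_distrib, Finset.sum_const, nsmul_eq_mul]
      _ = _ := by rw [hc]
  rw [expand, h4, h2]
  ring

lemma T_ge : (2:ℤ)^(2*n) ≤ ∑ p : V n × V n × V n, ee (gg f p) := by
  have hk := key f
  have hss : (0:ℤ) ≤ ∑ a : V n, ((walsh n f a)^2 - 2^n)^2 :=
    Finset.sum_nonneg fun a _ => sq_nonneg _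
  have hp : (0:ℤ) < 2^n := by positivity
  have h3 : (2:ℤ)^(3*n) = 2^n * 2^(2*n) := by rw [← pow_add]; ring_nf
  have hle : (2:ℤ)^n * 2^(2*n) ≤ 2^n * ∑ p : V n × V n × V n, ee (gg f p) := by
    linarith
  exact le_of_mul_le_mul_left hle hp

lemma T_eq_iff : (∑ p : V n × V n × V n, ee (gg f p)) = 2^(2*n)
    ↔ ∀ a : V n, (walsh n f a)^2 = 2^n := by
  have hk := key f
  have hp : (0:ℤ) < 2^n := by positivity
  have h3 : (2:ℤ)^(3*n) = 2^n * 2^(2*n) := by rw [← pow_add]; ring_nf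
  constructor
  · intro hT
    have hss : (∑ a : V n, ((walsh n f a)^2 - 2^n)^2) = 0 := by
      rw [hT] at hk; nlinarith [hk]
    intro a
    have := (Finset.sum_eq_zero_iff_of_nonneg (fun a _ => sq_nonneg ((walsh n f a)^2 - 2^n))).mp hss a (Finset.mem_univ a)
    have h0 : (walsh n f a)^2 - 2^n = 0 := by
      exact pow_eq_zero_iff (n := 2) (by norm_num) |>.mp this
    linarith
  · intro hb
    have hss : (∑ a : V n, ((walsh n f a)^2 - 2^n)^2) = 0 :=
      Finset.sum_eq_zero fun a _ => by rw [hb a]; ring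
    rw [hss, zero_add, h3] at hk
    exact mul_left_cancel₀ (by positivity) hk

def Bf : Finset (V n × V n × V n) := Finset.univ.filter (fun p => gg f p = 1)

def pis (p : V n × V n × V n) : Set (V n) := {p.1, p.2.1, p.2.2, p.1 + p.2.1 + p.2.2}

lemma z2_cases : ∀ u : ZMod 2, u = 0 ∨ u = 1 := by decide

lemma T_card : (∑ p : V n × V n × V n, ee (gg f p)) = 2^(3*n) - 2 * (Bf f).card := by
  have hee : ∀ u : ZMod 2, ee u = 1 - 2 * (if u = 1 then 1 else 0) := by decide
  have hcard : ((Finset.univ : Finset (V n × V n × V n)).card : ℤ) = 2^(3*n) := by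
    rw [Finset.card_univ]
    simp only [Fintype.card_prod, card_V]
    push_cast; ring
  calc (∑ p : V n × V n × V n, ee (gg f p))
      = ∑ p : V n × V n × V n, (1 - 2 * (if gg f p = 1 then 1 else 0)) := by
        refine Finset.sum_congr rfl fun p _ => hee _
    _ = (Finset.univ.card : ℤ) - 2 * ∑ p : V n × V n × V n, (if gg f p = 1 then (1:ℤ) else 0) := by
        rw [Finset.sum_sub_distrib, Finset.sum_const, nsmul_eq_mul, mul_one, ← Finset.mul_sum]
    _ = 2^(3*n) - 2 * (Bf f).card := by
        rw [hcard, Finset.sum_boole, Bf]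


-- vector identities
lemma vid1 (x y : V n) : x + y + x = y := by
  have sc : ∀ a b : ZMod 2, a + b + a = b := by decide
  exact funext fun i => sc (x i) (y i)

lemma vid2 (x y z : V n) : x + y + (x + z) + x = x + y + z := by
  have sc : ∀ a b c : ZMod 2, a + b + (a + c) + a = a + b + c := by decide
  exact funext fun i => sc (x i) (y i) (z i)

lemma cancel₁ {x y z : V n} (h : x + y + z = x) : y = z := by
  rw [show x + y + z = x + (y + z) from by ring] at h
  have := add_left_cancel (h.trans (add_zero x).symm)
  exact (vadd_eq_zero_iff y z).mp this

lemma cancel₂ {x y z : V n} (h : x + y + z = y) : x = z := by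
  rw [show x + y + z = y + (x + z) from by ring] at h
  have := add_left_cancel (h.trans (add_zero y).symm)
  exact (vadd_eq_zero_iff x z).mp this

lemma cancel₃ {x y z : V n} (h : x + y + z = z) : x = y := by
  rw [show x + y + z = z + (x + y) from by ring] at h
  have := add_left_cancel (h.trans (add_zero z).symm)
  exact (vadd_eq_zero_iff x y).mp this

lemma mem_Bf_distinct {p : V n × V n × V n} (hp : p ∈ Bf f) :
    p.1 ≠ p.2.1 ∧ p.1 ≠ p.2.2 ∧ p.2.1 ≠ p.2.2 := by
  classical
  have hg : gg f p = 1 := (Finset.mem_filter.mp hp).2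
  obtain ⟨x, y, z⟩ := p
  simp only [gg] at hg
  show x ≠ y ∧ x ≠ z ∧ y ≠ z
  refine ⟨fun h => ?_, fun h => ?_, fun h => ?_⟩
  · subst h
    rw [show x + x + z = z from by rw [vadd_self, zero_add]] at hg
    have sc : ∀ a b : ZMod 2, a + a + b + b ≠ 1 := by decide
    exact sc _ _ hg
  · subst h
    rw [show x + y + x = y from vid1 x y] at hg
    have sc : ∀ a b : ZMod 2, a + b + a + b ≠ 1 := by decide
    exact sc _ _ hg
  · subst h
    rw [show x + y + y = x from vadd_cancel x y] at hg
    have sc : ∀ a b : ZMod 2, a + b + b + a ≠ 1 := by decide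
    exact sc _ _ hg

lemma setSum_quad (x y z w : V n) (hxy : x ≠ y) (hxz : x ≠ z) (hxw : x ≠ w)
    (hyz : y ≠ z) (hyw : y ≠ w) (hzw : z ≠ w) :
    setSum ({x, y, z, w} : Set (V n)) f = f x + f y + f z + f w := by
  classical
  unfold setSum
  have hts : (Set.toFinite ({x, y, z, w} : Set (V n))).toFinset
      = ({x, y, z, w} : Finset (V n)) := by
    ext v
    simp only [Set.Finite.mem_toFinset, Set.mem_insert_iff, Set.mem_singleton_iff,
      Finset.mem_insert, Finset.mem_singleton]
  rw [hts, Finset.sum_insert (by simp [hxy, hxz, hxw]),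
    Finset.sum_insert (by simp [hyz, hyw]), Finset.sum_insert (by simp [hzw]),
    Finset.sum_singleton]
  ring

lemma span_pair_coe (u v : V n) :
    ((Submodule.span (ZMod 2) {u, v} : Submodule (ZMod 2) (V n)) : Set (V n))
      = {0, u, v, u + v} := by
  ext t
  simp only [SetLike.mem_coe, Submodule.mem_span_pair]
  constructor
  · rintro ⟨a, b, rfl⟩
    rcases z2_cases a with rfl|rfl <;> rcases z2_cases b with rfl|rfl <;>
      simp [Set.mem_insert_iff]
  · rintro (rfl|rfl|rfl|rfl)
    · exact ⟨0, 0, by simp⟩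
    · exact ⟨1, 0, by simp⟩
    · exact ⟨0, 1, by simp⟩
    · exact ⟨1, 1, by simp⟩

lemma quad_ncard (u v : V n) (hu : u ≠ 0) (hv : v ≠ 0) (huv : u ≠ v) :
    ({0, u, v, u + v} : Set (V n)).ncard = 4 := by
  have h1 : u + v ≠ 0 := fun h => huv ((vadd_eq_zero_iff u v).mp h)
  have h2 : u ≠ u + v := by
    intro h
    exact hv (add_left_cancel ((add_zero u).trans h)).symm
  have h3 : v ≠ u + v := by
    intro h
    have h' : 0 + v = u + v := by rw [zero_add]; exact h
    exact hu (add_right_cancel h').symm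
  have m1 : (0 : V n) ∉ ({u, v, u + v} : Set (V n)) := by
    simp only [Set.mem_insert_iff, Set.mem_singleton_iff]
    push_neg
    exact ⟨fun h => hu h.symm, fun h => hv h.symm, fun h => h1 h.symm⟩
  have m2 : u ∉ ({v, u + v} : Set (V n)) := by
    simp only [Set.mem_insert_iff, Set.mem_singleton_iff]
    push_neg
    exact ⟨huv, h2⟩
  have m3 : v ∉ ({u + v} : Set (V n)) := by simpa using h3
  rw [Set.ncard_insert_of_notMem m1, Set.ncard_insert_of_notMem m2,
    Set.ncard_insert_of_notMem m3, Set.ncard_singleton]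

lemma finrank_eq_two_of_card (U : Submodule (ZMod 2) (V n)) (h : Nat.card ↥U = 4) :
    Module.finrank (ZMod 2) U = 2 := by
  letI : Fintype ↥U := Fintype.ofFinite _
  have h2 : Fintype.card ↥U = 2 ^ Module.finrank (ZMod 2) U := by
    have := Module.card_eq_pow_finrank (K := ZMod 2) (V := ↥U)
    simpa [ZMod.card] using this
  rw [Nat.card_eq_fintype_card, h2] at h
  have h4 : (2:ℕ) ^ 2 = 2 ^ Module.finrank (ZMod 2) U := by rw [h]; norm_num
  exact (Nat.pow_right_injective (by norm_num) h4).symm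

lemma good_isFlat (x y z : V n) (hxy : x ≠ y) (hxz : x ≠ z) (hyz : y ≠ z) :
    IsFlat n 2 ({x, y, z, x + y + z} : Set (V n)) := by
  have hu : x + y ≠ 0 := fun h => hxy ((vadd_eq_zero_iff x y).mp h)
  have hv : x + z ≠ 0 := fun h => hxz ((vadd_eq_zero_iff x z).mp h)
  have huv : x + y ≠ x + z := fun h => hyz (add_left_cancel h)
  refine ⟨Submodule.span (ZMod 2) {x + y, x + z}, x, ?_, ?_⟩
  · refine finrank_eq_two_of_card _ ?_
    have := quad_ncard (x + y) (x + z) hu hv huv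
    rw [← this, ← span_pair_coe]
    exact Nat.card_coe_set_eq _
  · rw [span_pair_coe]
    rw [Set.image_insert_eq, Set.image_insert_eq, Set.image_insert_eq, Set.image_singleton]
    simp only [zero_add, vid1, vid2]

lemma isFlat_good {A : Set (V n)} (h : IsFlat n 2 A) :
    ∃ x y z : V n, x ≠ y ∧ x ≠ z ∧ y ≠ z ∧ A = {x, y, z, x + y + z} := by
  classical
  obtain ⟨U, a, hrk, hA⟩ := h
  have hcard : ((U : Set (V n))).ncard = 4 := by
    rw [← Nat.card_coe_set_eq]
    show Nat.card ↥U = 4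
    letI : Fintype ↥U := Fintype.ofFinite _
    rw [Nat.card_eq_fintype_card, Module.card_eq_pow_finrank (K := ZMod 2) (V := ↥U), hrk,
      ZMod.card]
    norm_num
  -- extract two distinct nonzero elements
  have h0 : (0 : V n) ∈ (U : Set (V n)) := U.zero_mem
  have hex1 : ∃ u ∈ (U : Set (V n)), u ≠ 0 := by
    by_contra hc
    push_neg at hc
    have : (U : Set (V n)) ⊆ {0} := fun t ht => hc t ht
    have := Set.ncard_le_ncard this (Set.finite_singleton 0)
    simp [Set.ncard_singleton, hcard] at this
  obtain ⟨u, huU, hu0⟩ := hex1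
  have hex2 : ∃ v ∈ (U : Set (V n)), v ≠ 0 ∧ v ≠ u := by
    by_contra hc
    push_neg at hc
    have hsub : (U : Set (V n)) ⊆ {0, u} := by
      intro t ht
      rcases eq_or_ne t 0 with rfl|h1
      · exact Set.mem_insert _ _
      · rcases eq_or_ne t u with rfl|h2
        · exact Set.mem_insert_of_mem _ rfl
        · exact absurd (hc t ht h1) (by simpa using h2)
    have := Set.ncard_le_ncard hsub (Set.toFinite _)
    have h2 : ({0, u} : Set (V n)).ncard ≤ 2 := by
      apply le_trans (Set.ncard_insert_le _ _); simp [Set.ncard_singleton]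
    omega
  obtain ⟨v, hvU, hv0, hvu⟩ := hex2
  have hsum : u + v ∈ (U : Set (V n)) := U.add_mem huU hvU
  -- U = {0, u, v, u+v}
  have hset : (U : Set (V n)) = {0, u, v, u + v} := by
    have hsub : ({0, u, v, u + v} : Set (V n)) ⊆ (U : Set (V n)) := by
      rintro t (rfl|rfl|rfl|rfl)
      exacts [h0, huU, hvU, hsum]
    refine (Set.eq_of_subset_of_ncard_le hsub ?_ (Set.toFinite _)).symm
    rw [hcard, quad_ncard u v hu0 hv0 (Ne.symm hvu)]
  subst hA
  refine ⟨a, u + a, v + a, ?_, ?_, ?_, ?_⟩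
  · intro h
    have h' : 0 + a = u + a := by rw [zero_add]; exact h
    exact hu0 (add_right_cancel h').symm
  · intro h
    have h' : 0 + a = v + a := by rw [zero_add]; exact h
    exact hv0 (add_right_cancel h').symm
  · intro h
    exact hvu (add_right_cancel h).symm
  · rw [hset]
    rw [Set.image_insert_eq, Set.image_insert_eq, Set.image_insert_eq, Set.image_singleton]
    have hw : a + (u + a) + (v + a) = u + v + a := by
      have sc : ∀ a b c : ZMod 2, a + (b + a) + (c + a) = b + c + a := by decide
      exact funext fun i => sc (a i) (u i) (v i)
    simp only [zero_add, hw]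


lemma fourth (s : Finset (V n)) (hcard : s.card = 4) (hsum : ∑ v ∈ s, v = 0)
    {x y z : V n} (hx : x ∈ s) (hy : y ∈ s) (hz : z ∈ s)
    (hxy : x ≠ y) (hxz : x ≠ z) (hyz : y ≠ z) :
    s = {x, y, z, x + y + z} := by
  classical
  have h1 : ({x, y, z} : Finset (V n)) ⊆ s := by
    intro t ht
    simp only [Finset.mem_insert, Finset.mem_singleton] at ht
    rcases ht with rfl|rfl|rfl <;> assumption
  have hc3 : ({x, y, z} : Finset (V n)).card = 3 := by
    rw [Finset.card_insert_of_notMem (by simp [hxy, hxz]),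
      Finset.card_insert_of_notMem (by simp [hyz]), Finset.card_singleton]
  have hdiff : (s \ {x, y, z}).card = 1 := by
    rw [Finset.card_sdiff_of_subset h1, hcard, hc3]
  obtain ⟨u, hu⟩ := Finset.card_eq_one.mp hdiff
  have humem : u ∈ s \ ({x, y, z} : Finset (V n)) := hu ▸ Finset.mem_singleton_self u
  have hun : u ∉ ({x, y, z} : Finset (V n)) := (Finset.mem_sdiff.mp humem).2
  have hxu : x ≠ u := fun h => hun (by rw [← h]; simp)
  have hyu : y ≠ u := fun h => hun (by rw [← h]; simp)
  have hzu : z ≠ u := fun h => hun (by rw [← h]; simp)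
  have hs : s = insert x (insert y (insert z {u})) := by
    have h2 := Finset.sdiff_union_of_subset h1
    rw [hu] at h2
    rw [← h2]
    ext t
    simp only [Finset.mem_union, Finset.mem_insert, Finset.mem_singleton]
    tauto
  have hsum2 : x + (y + (z + u)) = 0 := by
    rw [hs, Finset.sum_insert (by simp [hxy, hxz, hxu]),
      Finset.sum_insert (by simp [hyz, hyu]), Finset.sum_insert (by simp [hzu]),
      Finset.sum_singleton] at hsum
    exact hsum
  have husum : u = x + y + z := by
    have h' : (x + y + z) + u = 0 := by
      rw [show (x + y + z) + u = x + (y + (z + u)) from by ring]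
      exact hsum2
    exact ((vadd_eq_zero_iff _ _).mp h').symm
  rw [hs, husum]

def P3 (s : Finset (V n)) (p : V n × V n × V n) : Prop :=
  p.1 ∈ s ∧ p.2.1 ∈ s ∧ p.2.2 ∈ s ∧ p.1 ≠ p.2.1 ∧ p.1 ≠ p.2.2 ∧ p.2.1 ≠ p.2.2

instance (s : Finset (V n)) : DecidablePred (P3 s) := fun p => by
  unfold P3; infer_instance

def toEmb (s : Finset (V n)) (q : {p : V n × V n × V n // P3 s p}) :
    Fin 3 ↪ {v // v ∈ s} :=
  ⟨![⟨q.1.1, q.2.1⟩, ⟨q.1.2.1, q.2.2.1⟩, ⟨q.1.2.2, q.2.2.2.1⟩], by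
    obtain ⟨⟨x, y, z⟩, hx, hy, hz, hxy, hxz, hyz⟩ := q
    replace hxy : x ≠ y := hxy
    replace hxz : x ≠ z := hxz
    replace hyz : y ≠ z := hyz
    intro i j hij
    fin_cases i <;> fin_cases j <;>
      simp [Subtype.ext_iff] at hij ⊢ <;>
      first
        | rfl
        | exact absurd hij hxy
        | exact absurd hij hxz
        | exact absurd hij hyz
        | exact absurd hij.symm hxy
        | exact absurd hij.symm hxz
        | exact absurd hij.symm hyz⟩

def fromEmb (s : Finset (V n)) (F : Fin 3 ↪ {v // v ∈ s}) :
    {p : V n × V n × V n // P3 s p} :=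
  ⟨((F 0 : V n), ((F 1 : V n), (F 2 : V n))), (F 0).2, (F 1).2, (F 2).2,
    fun h => by have := F.injective (Subtype.ext h); exact absurd this (by decide),
    fun h => by have := F.injective (Subtype.ext h); exact absurd this (by decide),
    fun h => by have := F.injective (Subtype.ext h); exact absurd this (by decide)⟩

def embEquiv (s : Finset (V n)) : {p : V n × V n × V n // P3 s p} ≃ (Fin 3 ↪ {v // v ∈ s}) where
  toFun := toEmb s
  invFun := fromEmb s
  left_inv := fun q => by
    obtain ⟨⟨x, y, z⟩, hq⟩ := q
    rfl
  right_inv := fun F => by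
    ext i
    fin_cases i <;> rfl

lemma card_triples (s : Finset (V n)) (h : s.card = 4) :
    (Finset.univ.filter (fun p : V n × V n × V n => P3 s p)).card = 24 := by
  rw [← Fintype.card_subtype]
  rw [Fintype.card_congr (embEquiv s), Fintype.card_embedding_eq, Fintype.card_coe, h,
    Fintype.card_fin]
  rfl

def pif (p : V n × V n × V n) : Finset (V n) :=
  {p.1, p.2.1, p.2.2, p.1 + p.2.1 + p.2.2}

lemma pif_card {p : V n × V n × V n} (h1 : p.1 ≠ p.2.1) (h2 : p.1 ≠ p.2.2)
    (h3 : p.2.1 ≠ p.2.2) : (pif p).card = 4 := by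
  obtain ⟨x, y, z⟩ := p
  simp only at h1 h2 h3
  have hw1 : x ≠ x + y + z := fun h => h3 (cancel₁ h.symm)
  have hw2 : y ≠ x + y + z := fun h => h2 (cancel₂ h.symm)
  have hw3 : z ≠ x + y + z := fun h => h1 (cancel₃ h.symm)
  rw [pif]
  rw [Finset.card_insert_of_notMem (by simp [h1, h2, hw1]),
    Finset.card_insert_of_notMem (by simp [h3, hw2]),
    Finset.card_insert_of_notMem (by simp [hw3]), Finset.card_singleton]

lemma pif_sum {p : V n × V n × V n} (h1 : p.1 ≠ p.2.1) (h2 : p.1 ≠ p.2.2)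
    (h3 : p.2.1 ≠ p.2.2) : ∑ v ∈ pif p, v = 0 := by
  obtain ⟨x, y, z⟩ := p
  simp only at h1 h2 h3
  have hw1 : x ≠ x + y + z := fun h => h3 (cancel₁ h.symm)
  have hw2 : y ≠ x + y + z := fun h => h2 (cancel₂ h.symm)
  have hw3 : z ≠ x + y + z := fun h => h1 (cancel₃ h.symm)
  rw [pif, Finset.sum_insert (by simp [h1, h2, hw1]),
    Finset.sum_insert (by simp [h3, hw2]), Finset.sum_insert (by simp [hw3]),
    Finset.sum_singleton]
  rw [show x + (y + (z + (x + y + z))) = (x + y + z) + (x + y + z) from by ring]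
  exact vadd_self _

lemma setSum_pif {p : V n × V n × V n} (h1 : p.1 ≠ p.2.1) (h2 : p.1 ≠ p.2.2)
    (h3 : p.2.1 ≠ p.2.2) : setSum (↑(pif p) : Set (V n)) f = gg f p := by
  obtain ⟨x, y, z⟩ := p
  simp only at h1 h2 h3
  have hw1 : x ≠ x + y + z := fun h => h3 (cancel₁ h.symm)
  have hw2 : y ≠ x + y + z := fun h => h2 (cancel₂ h.symm)
  have hw3 : z ≠ x + y + z := fun h => h1 (cancel₃ h.symm)
  have hcoe : (↑(pif (x, y, z)) : Set (V n)) = {x, y, z, x + y + z} := by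
    simp [pif]
  rw [hcoe, setSum_quad f x y z (x + y + z) h1 h2 hw1 h3 hw2 hw3]
  rfl

lemma fiber_card (A : Finset (V n)) (hA : A ∈ (Bf f).image pif) :
    ((Bf f).filter (fun p => pif p = A)).card = 24 := by
  classical
  obtain ⟨p₀, hp₀, hA₀⟩ := Finset.mem_image.mp hA
  obtain ⟨d₁, d₂, d₃⟩ := mem_Bf_distinct f hp₀
  have hcard : A.card = 4 := by rw [← hA₀]; exact pif_card d₁ d₂ d₃
  have hsum : ∑ v ∈ A, v = 0 := by rw [← hA₀]; exact pif_sum d₁ d₂ d₃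
  have hg₀ : gg f p₀ = 1 := (Finset.mem_filter.mp hp₀).2
  have hfilter : (Bf f).filter (fun p => pif p = A)
      = Finset.univ.filter (fun p : V n × V n × V n => P3 A p) := by
    ext p
    simp only [Finset.mem_filter, Finset.mem_univ, true_and]
    constructor
    · rintro ⟨hpB, hpe⟩
      obtain ⟨e₁, e₂, e₃⟩ := mem_Bf_distinct f hpB
      refine ⟨?_, ?_, ?_, e₁, e₂, e₃⟩ <;> rw [← hpe] <;> simp [pif]
    · rintro ⟨m₁, m₂, m₃, e₁, e₂, e₃⟩
      have hpe : pif p = A := (fourth A hcard hsum m₁ m₂ m₃ e₁ e₂ e₃).symm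
      refine ⟨?_, hpe⟩
      have hset : setSum (↑A : Set (V n)) f = gg f p := by
        rw [← hpe]; exact setSum_pif f e₁ e₂ e₃
      have hset₀ : setSum (↑A : Set (V n)) f = gg f p₀ := by
        rw [← hA₀]; exact setSum_pif f d₁ d₂ d₃
      have : gg f p = 1 := by rw [← hset, hset₀, hg₀]
      exact Finset.mem_filter.mpr ⟨Finset.mem_univ _, this⟩
  rw [hfilter]
  exact card_triples A hcard

lemma card_Bf : (Bf f).card = 24 * ((Bf f).image pif).card := by
  classical
  rw [Finset.card_eq_sum_card_fiberwise
    (fun p hp => Finset.mem_image_of_mem pif hp)]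
  rw [Finset.sum_congr rfl (fun A hA => fiber_card f A hA), Finset.sum_const,
    smul_eq_mul, mul_comm]

lemma N_eq : {A : Set (V n) | IsFlat n 2 A ∧ setSum A f ≠ 0}
    = (fun (t : Finset (V n)) => (↑t : Set (V n))) '' ↑((Bf f).image pif) := by
  ext A
  simp only [Set.mem_setOf_eq, Set.mem_image, Finset.mem_coe, Finset.mem_image]
  constructor
  · rintro ⟨hflat, hsum⟩
    obtain ⟨x, y, z, hxy, hxz, hyz, rfl⟩ := isFlat_good hflat
    have hcoe : (↑(pif (x, y, z)) : Set (V n)) = {x, y, z, x + y + z} := by simp [pif]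
    have hw1 : x ≠ x + y + z := fun h => hyz (cancel₁ h.symm)
    have hw2 : y ≠ x + y + z := fun h => hxz (cancel₂ h.symm)
    have hw3 : z ≠ x + y + z := fun h => hxy (cancel₃ h.symm)
    have hgg : gg f (x, y, z) = setSum ({x, y, z, x + y + z} : Set (V n)) f := by
      rw [setSum_quad f x y z (x + y + z) hxy hxz hw1 hyz hw2 hw3]
      rfl
    have hone : gg f (x, y, z) = 1 := by
      have hne : gg f (x, y, z) ≠ 0 := by rw [hgg]; exact hsum
      rcases z2_cases (gg f (x, y, z)) with h|h
      · exact absurd h hne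
      · exact h
    exact ⟨pif (x, y, z), ⟨(x, y, z),
      Finset.mem_filter.mpr ⟨Finset.mem_univ _, hone⟩, rfl⟩, hcoe⟩
  · rintro ⟨t, ⟨p, hp, rfl⟩, rfl⟩
    obtain ⟨e₁, e₂, e₃⟩ := mem_Bf_distinct f hp
    have hg : gg f p = 1 := (Finset.mem_filter.mp hp).2
    obtain ⟨x, y, z⟩ := p
    simp only at e₁ e₂ e₃
    have hcoe : (↑(pif (x, y, z)) : Set (V n)) = {x, y, z, x + y + z} := by simp [pif]
    constructor
    · rw [hcoe]; exact good_isFlat x y z e₁ e₂ e₃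
    · rw [setSum_pif f e₁ e₂ e₃, hg]
      exact one_ne_zero

end Aux

theorem stmt_19 (n : ℕ) (f : (Fin n → ZMod 2) → ZMod 2) :
    (Set.ncard {A : Set (Fin n → ZMod 2) | IsFlat n 2 A ∧ setSum A f ≠ 0} : ℚ) ≤
      (2 : ℚ) ^ (2 * n) / 16 * ((2 : ℚ) ^ n - 1) / 3 ∧
    ((Set.ncard {A : Set (Fin n → ZMod 2) | IsFlat n 2 A ∧ setSum A f ≠ 0} : ℚ) =
        (2 : ℚ) ^ (2 * n) / 16 * ((2 : ℚ) ^ n - 1) / 3 ↔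
      ∀ a, (walsh n f a) ^ 2 = 2 ^ n) := by
  classical
  have hN : (Set.ncard {A : Set (Fin n → ZMod 2) | IsFlat n 2 A ∧ setSum A f ≠ 0})
      = ((Aux.Bf f).image Aux.pif).card := by
    rw [Aux.N_eq f, Set.ncard_image_of_injective _ Finset.coe_injective,
      Set.ncard_coe_finset]
  set c : ℤ := (((Aux.Bf f).image Aux.pif).card : ℤ) with hc
  have hTc : (∑ p : Aux.V n × Aux.V n × Aux.V n, Aux.ee (Aux.gg f p))
      = 2^(3*n) - 48 * c := by
    rw [Aux.T_card f]
    have h24 : ((Aux.Bf f).card : ℤ) = 24 * c := by rw [Aux.card_Bf f]; push_cast; ring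
    rw [h24]; ring
  have hge := Aux.T_ge f
  have hpowQ : (2:ℚ)^(3*n) = 2^(2*n) * 2^n := by rw [← pow_add]; ring_nf
  have hRHS : (2:ℚ)^(2*n)/16 * ((2:ℚ)^n - 1)/3 = ((2:ℚ)^(3*n) - 2^(2*n))/48 := by
    rw [hpowQ]; ring
  have hZle : 48 * c ≤ 2^(3*n) - 2^(2*n) := by linarith [hge, hTc]
  constructor
  · rw [hN, hRHS]
    have hQ : (48:ℚ) * (((Aux.Bf f).image Aux.pif).card : ℚ) ≤ 2^(3*n) - 2^(2*n) := by
      exact_mod_cast hZle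
    linarith
  · rw [hN, hRHS]
    constructor
    · intro hEq
      apply (Aux.T_eq_iff f).mp
      have hQ : (48:ℚ) * (((Aux.Bf f).image Aux.pif).card : ℚ) = 2^(3*n) - 2^(2*n) := by
        rw [eq_div_iff (by norm_num : (48:ℚ) ≠ 0)] at hEq
        linarith
      have hZ : 48 * c = 2^(3*n) - 2^(2*n) := by exact_mod_cast hQ
      rw [hTc]
      linarith
    · intro hb
      have hTeq := (Aux.T_eq_iff f).mpr hb
      have hZ : 48 * c = 2^(3*n) - 2^(2*n) := by
        rw [hTc] at hTeq; linarith
      have hQ : (48:ℚ) * (((Aux.Bf f).image Aux.pif).card : ℚ) = 2^(3*n) - 2^(2*n) := by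
        exact_mod_cast hZ
      rw [eq_div_iff (by norm_num : (48:ℚ) ≠ 0)]
      linarith
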